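/- Let α > 1/4 and let f, g : [0,∞) → ℝ be differentiable functions satisfying f′(t) = g(t) and g′(t) = −α·f(t)/(1+t²) for all t ≥ 0. Define E(t) = α·f(t)²/(1+t²)^{1/2} + (1+t²)^{1/2}·g(t)². Then there exist constants 0 < c ≤ C < ∞, depending only on α, such that c·E(0) ≤ E(t) ≤ C·E(0) for all t ≥ 0. -/

import Mathlib

set_option maxHeartbeats 1000000

open Real Set

noncomputable section

/-- The weighted energy `E(t) = α f(t)²/(1+t²)^{1/2} + (1+t²)^{1/2} g(t)²`. -/
def waveEnergy (α : ℝ) (f g : ℝ → ℝ) (t : ℝ) : ℝ :=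
  α * f t ^ 2 / Real.sqrt (1 + t ^ 2) + Real.sqrt (1 + t ^ 2) * g t ^ 2

lemma hasDeriv_sqrt_one_add_sq (t : ℝ) :
    HasDerivAt (fun u : ℝ => Real.sqrt (1 + u ^ 2)) (t / Real.sqrt (1 + t ^ 2)) t := by
  have h1 : HasDerivAt (fun u : ℝ => 1 + u ^ 2) (2 * t) t := by
    simpa using ((hasDerivAt_pow 2 t).const_add 1)
  have h2 := h1.sqrt (by positivity)
  have hs : Real.sqrt (1 + t ^ 2) ≠ 0 := by positivity
  convert h2 using 1
  field_simp

lemma hasDeriv_ratio (u : ℝ) :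
    HasDerivAt (fun v : ℝ => v / Real.sqrt (1 + v ^ 2))
      (1 / Real.sqrt (1 + u ^ 2) ^ 3) u := by
  have hS0 : 0 < Real.sqrt (1 + u ^ 2) := by positivity
  have hS2 : Real.sqrt (1 + u ^ 2) ^ 2 = 1 + u ^ 2 := Real.sq_sqrt (by positivity)
  have h := (hasDerivAt_id u).div (hasDeriv_sqrt_one_add_sq u) (ne_of_gt hS0)
  refine h.congr_deriv (Eq.symm ?_)
  set S := Real.sqrt (1 + u ^ 2)
  simp only [id]
  field_simp
  linear_combination (-1) * hS2

lemma monoOn_of_hasDeriv {H H' : ℝ → ℝ}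
    (h : ∀ t : ℝ, 0 ≤ t → HasDerivWithinAt H (H' t) (Ici 0) t)
    (h0 : ∀ t : ℝ, 0 ≤ t → 0 ≤ H' t) : MonotoneOn H (Ici 0) := by
  apply monotoneOn_of_deriv_nonneg (convex_Ici 0)
  · exact fun t ht => (h t ht).continuousWithinAt
  · rw [interior_Ici]
    exact fun t ht =>
      (((h t (le_of_lt ht)).hasDerivAt (Ici_mem_nhds ht)).differentiableAt).differentiableWithinAt
  · rw [interior_Ici]
    intro t ht
    rw [((h t (le_of_lt ht)).hasDerivAt (Ici_mem_nhds ht)).deriv]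
    exact h0 t (le_of_lt ht)

lemma antiOn_of_hasDeriv {H H' : ℝ → ℝ}
    (h : ∀ t : ℝ, 0 ≤ t → HasDerivWithinAt H (H' t) (Ici 0) t)
    (h0 : ∀ t : ℝ, 0 ≤ t → H' t ≤ 0) : AntitoneOn H (Ici 0) := by
  apply antitoneOn_of_deriv_nonpos (convex_Ici 0)
  · exact fun t ht => (h t ht).continuousWithinAt
  · rw [interior_Ici]
    exact fun t ht =>
      (((h t (le_of_lt ht)).hasDerivAt (Ici_mem_nhds ht)).differentiableAt).differentiableWithinAt
  · rw [interior_Ici]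
    intro t ht
    rw [((h t (le_of_lt ht)).hasDerivAt (Ici_mem_nhds ht)).deriv]
    exact h0 t (le_of_lt ht)

lemma alg0 {a S w F G : ℝ} (hw : |w| ≤ 2*a*S) :
    w * (F * G) ≤ a^2 * F^2 + S^2 * G^2 := by
  rcases le_total 0 (F * G) with h | h
  · have h1 : w * (F*G) ≤ (2*a*S) * (F*G) :=
      mul_le_mul_of_nonneg_right (le_trans (le_abs_self w) hw) h
    nlinarith [h1, sq_nonneg (a*F - S*G)]
  · have h0 : -(2*a*S) ≤ w := by linarith [neg_abs_le w]
    have h1 : w * (F*G) ≤ (-(2*a*S)) * (F*G) := mul_le_mul_of_nonpos_right h0 h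
    nlinarith [h1, sq_nonneg (a*F + S*G)]

lemma hasDeriv_G (α : ℝ) (f g : ℝ → ℝ)
    (hf : ∀ t : ℝ, 0 ≤ t → HasDerivWithinAt f (g t) (Ici 0) t)
    (hg : ∀ t : ℝ, 0 ≤ t → HasDerivWithinAt g (-α * f t / (1 + t ^ 2)) (Ici 0) t)
    (t : ℝ) (ht : 0 ≤ t) :
    HasDerivWithinAt (fun u => waveEnergy α f g u - u / Real.sqrt (1 + u ^ 2) * (f u * g u))
      (-(f t * g t) / Real.sqrt (1 + t ^ 2) ^ 3) (Ici 0) t := by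
  have hS0 : 0 < Real.sqrt (1 + t ^ 2) := by positivity
  have hS2 : Real.sqrt (1 + t ^ 2) ^ 2 = 1 + t ^ 2 := Real.sq_sqrt (by positivity)
  have hsd := (hasDeriv_sqrt_one_add_sq t).hasDerivWithinAt (s := Ici 0)
  have hA : HasDerivWithinAt (fun u => α * f u ^ 2) (α * (2 * f t * g t)) (Ici 0) t := by
    simpa [mul_comm, mul_assoc, mul_left_comm] using ((hf t ht).pow 2).const_mul α
  have hB := hA.div hsd (ne_of_gt hS0)
  have hC := hsd.mul ((hg t ht).pow 2)
  have hD := (hasDerivWithinAt_id t (Ici 0)).div hsd (ne_of_gt hS0)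
  have hE := hD.mul ((hf t ht).mul (hg t ht))
  have total := (hB.add hC).sub hE
  refine total.congr_deriv (Eq.symm ?_)
  have h12 : (1 : ℝ) + t ^ 2 = Real.sqrt (1 + t ^ 2) ^ 2 := hS2.symm
  set S := Real.sqrt (1 + t ^ 2) with hSdef
  rw [h12]
  simp only [id, Pi.div_apply, Pi.mul_apply, Pi.pow_apply, ← hSdef, Nat.cast_ofNat, Nat.add_one_sub_one, pow_one]
  field_simp
  linear_combination f t * g t * hS2

/-- Lemma: stability of traveling waves: for `α > 1/4` there are
constants `0 < c ≤ C`, depending only on `α`, such that for every solution of the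
ODE system `f′ = g`, `g′ = −α f/(1+t²)` on `[0,∞)` the energy
`E(t) = α f(t)²/(1+t²)^{1/2} + (1+t²)^{1/2} g(t)²` satisfies
`c E(0) ≤ E(t) ≤ C E(0)` for all `t ≥ 0`. -/
theorem statement10 (α : ℝ) (hα : 1 / 4 < α) :
    ∃ c C : ℝ, 0 < c ∧ c ≤ C ∧
      ∀ f g : ℝ → ℝ,
        (∀ t : ℝ, 0 ≤ t → HasDerivWithinAt f (g t) (Ici (0 : ℝ)) t) →
        (∀ t : ℝ, 0 ≤ t → HasDerivWithinAt g (-α * f t / (1 + t ^ 2)) (Ici (0 : ℝ)) t) →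
        ∀ t : ℝ, 0 ≤ t →
          c * waveEnergy α f g 0 ≤ waveEnergy α f g t ∧
            waveEnergy α f g t ≤ C * waveEnergy α f g 0 := by
  have hα0 : (0:ℝ) < α := by linarith
  set a := Real.sqrt α with hadef
  have ha2 : a ^ 2 = α := Real.sq_sqrt hα0.le
  have ha : 1/2 < a := by
    have h4 : Real.sqrt (1/4) < Real.sqrt α := Real.sqrt_lt_sqrt (by norm_num) hα
    have h5 : Real.sqrt (1/4) = 1/2 := by
      rw [show (1/4 : ℝ) = (1/2)^2 by norm_num, Real.sqrt_sq (by norm_num : (0:ℝ) ≤ 1/2)]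
    linarith
  have h2a : (0:ℝ) < 2*a - 1 := by linarith
  set K : ℝ := 1/(2*a - 1) with hKdef
  have hK : 0 < K := one_div_pos.2 h2a
  have hK2a : K * (2*a - 1) = 1 := by
    rw [hKdef]; field_simp
  clear_value a K
  refine ⟨Real.exp (-K) * (2*a) / (2*a + 1), Real.exp K * (2*a) / (2*a - 1), ?_, ?_, ?_⟩
  · exact div_pos (mul_pos (Real.exp_pos _) (by linarith)) (by linarith)
  · have hc1 : Real.exp (-K) * (2*a) / (2*a + 1) ≤ Real.exp (-K) := by
      rw [div_le_iff₀ (by linarith)]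
      nlinarith [Real.exp_pos (-K)]
    have hc2 : Real.exp K ≤ Real.exp K * (2*a) / (2*a - 1) := by
      rw [le_div_iff₀ h2a]
      nlinarith [Real.exp_pos K]
    have hc3 : Real.exp (-K) ≤ Real.exp K := Real.exp_le_exp.2 (by linarith)
    linarith
  intro f g hf hg
  set E : ℝ → ℝ := waveEnergy α f g with hEdef
  set Gf : ℝ → ℝ := fun u => E u - u / Real.sqrt (1 + u ^ 2) * (f u * g u) with hGfdef
  -- pointwise facts
  have hfacts : ∀ u : ℝ, 0 ≤ u →
      0 ≤ E u ∧ 2*a * Gf u ≤ (2*a + 1) * E u ∧ (2*a - 1) * E u ≤ 2*a * Gf u ∧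
      0 ≤ K * Gf u - f u * g u ∧ 0 ≤ K * Gf u + f u * g u := by
    intro u hu
    have hS0 : 0 < Real.sqrt (1 + u ^ 2) := by positivity
    have hS2 : Real.sqrt (1 + u ^ 2) ^ 2 = 1 + u ^ 2 := Real.sq_sqrt (by positivity)
    set S := Real.sqrt (1 + u ^ 2) with hSdef
    have hts : u ≤ S := by nlinarith
    have hES : E u * S = a^2 * f u ^ 2 + S^2 * g u ^ 2 := by
      simp only [hEdef, waveEnergy, ← hSdef]
      field_simp
      linear_combination (-(f u ^ 2)) * ha2
    have hGS : Gf u * S = a^2 * f u ^ 2 + S^2 * g u ^ 2 - u * (f u * g u) := by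
      simp only [hGfdef]
      rw [sub_mul]
      rw [hES]
      field_simp
      simp only [hSdef]; ring
    have h2apos : (0:ℝ) < 2*a := by linarith
    have hw1 : |u + (2*a - 1)*S| ≤ 2*a*S := by
      rw [abs_of_nonneg (by nlinarith)]
      linarith
    have hw2 : |u - (2*a - 1)*S| ≤ 2*a*S := by
      rw [abs_le]
      constructor <;> nlinarith
    have hw3 : |2*a*u| ≤ 2*a*S := by
      rw [abs_of_nonneg (by positivity)]
      exact mul_le_mul_of_nonneg_left hts (by linarith)
    have hw3' : |(-(2*a*u))| ≤ 2*a*S := by rwa [abs_neg]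
    have hESa : 2*a*(E u * S) = 2*a*(a^2*f u^2 + S^2*g u^2) := by rw [hES]
    have hGSa : 2*a*(Gf u * S) = 2*a*(a^2*f u^2 + S^2*g u^2 - u*(f u*g u)) := by rw [hGS]
    have h1 := alg0 (F := f u) (G := g u) hw1
    have h1' := alg0 (F := f u) (G := g u) hw2
    have h2 := alg0 (F := f u) (G := g u) hw3
    have h2' := alg0 (F := f u) (G := g u) hw3'
    have hEnn : 0 ≤ E u := by
      have h : (0:ℝ) * S ≤ E u * S := by linarith [hES, sq_nonneg (a * f u), sq_nonneg (S * g u)]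
      exact le_of_mul_le_mul_right h hS0
    have hGa : 2*a * Gf u ≤ (2*a + 1) * E u := by
      have h : (2*a * Gf u) * S ≤ ((2*a + 1) * E u) * S := by linarith [hGSa, hESa, hES, h2']
      exact le_of_mul_le_mul_right h hS0
    have hGb : (2*a - 1) * E u ≤ 2*a * Gf u := by
      have h : ((2*a - 1) * E u) * S ≤ (2*a * Gf u) * S := by linarith [hGSa, hESa, hES, h2]
      exact le_of_mul_le_mul_right h hS0
    have hkey1 : (2*a - 1) * (f u * g u) ≤ Gf u := by
      have h : ((2*a - 1) * (f u * g u)) * S ≤ Gf u * S := by linarith [hGS, h1]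
      exact le_of_mul_le_mul_right h hS0
    have hkey2 : (2*a - 1) * (-(f u * g u)) ≤ Gf u := by
      have h : ((2*a - 1) * (-(f u * g u))) * S ≤ Gf u * S := by linarith [hGS, h1']
      exact le_of_mul_le_mul_right h hS0
    refine ⟨hEnn, hGa, hGb, ?_, ?_⟩
    · have heq : K * Gf u - f u * g u = K * (Gf u - (2*a - 1) * (f u * g u)) := by
        linear_combination (f u * g u) * hK2a
      rw [heq]
      exact mul_nonneg hK.le (by linarith)
    · have heq : K * Gf u + f u * g u = K * (Gf u - (2*a - 1) * (-(f u * g u))) := by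
        linear_combination (-(f u * g u)) * hK2a
      rw [heq]
      exact mul_nonneg hK.le (by linarith)
  -- monotone / antitone weighted energies
  have hGd : ∀ u : ℝ, 0 ≤ u → HasDerivWithinAt Gf
      (-(f u * g u) / Real.sqrt (1 + u ^ 2) ^ 3) (Ici 0) u :=
    fun u hu => hasDeriv_G α f g hf hg u hu
  have hMono : MonotoneOn (fun u => Gf u * Real.exp (K * (u / Real.sqrt (1 + u ^ 2)))) (Ici 0) := by
    apply monoOn_of_hasDeriv
      (H' := fun u => (K * Gf u - f u * g u) / Real.sqrt (1 + u ^ 2) ^ 3 *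
        Real.exp (K * (u / Real.sqrt (1 + u ^ 2))))
    · intro u hu
      have hexp := (((hasDeriv_ratio u).const_mul K).exp).hasDerivWithinAt (s := Ici 0)
      have h := (hGd u hu).mul hexp
      refine h.congr_deriv (Eq.symm ?_)
      ring
    · intro u hu
      have hS0 : 0 < Real.sqrt (1 + u ^ 2) := by positivity
      exact mul_nonneg (div_nonneg (hfacts u hu).2.2.2.1 (by positivity)) (Real.exp_pos _).le
  have hAnti : AntitoneOn (fun u => Gf u * Real.exp (-K * (u / Real.sqrt (1 + u ^ 2)))) (Ici 0) := by
    apply antiOn_of_hasDeriv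
      (H' := fun u => -((K * Gf u + f u * g u) / Real.sqrt (1 + u ^ 2) ^ 3) *
        Real.exp (-K * (u / Real.sqrt (1 + u ^ 2))))
    · intro u hu
      have hexp := (((hasDeriv_ratio u).const_mul (-K)).exp).hasDerivWithinAt (s := Ici 0)
      have h := (hGd u hu).mul hexp
      refine h.congr_deriv (Eq.symm ?_)
      ring
    · intro u hu
      have hS0 : 0 < Real.sqrt (1 + u ^ 2) := by positivity
      have := mul_nonneg (div_nonneg (hfacts u hu).2.2.2.2
        (by positivity : (0:ℝ) ≤ Real.sqrt (1 + u ^ 2) ^ 3)) (Real.exp_pos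
          (-K * (u / Real.sqrt (1 + u ^ 2)))).le
      linarith [this]
  -- evaluate at 0
  have hG0 : Gf 0 = E 0 := by
    simp [hGfdef]
  clear_value E Gf
  intro t ht
  obtain ⟨hEt, hGat, hGbt, _, _⟩ := hfacts t ht
  obtain ⟨hE0, _, _, _, _⟩ := hfacts 0 le_rfl
  have hS0 : 0 < Real.sqrt (1 + t ^ 2) := by positivity
  have hS2 : Real.sqrt (1 + t ^ 2) ^ 2 = 1 + t ^ 2 := Real.sq_sqrt (by positivity)
  have hts : t ≤ Real.sqrt (1 + t ^ 2) := by nlinarith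
  have hψ1 : t / Real.sqrt (1 + t ^ 2) ≤ 1 := (div_le_one hS0).2 hts
  have hψ0 : 0 ≤ t / Real.sqrt (1 + t ^ 2) := div_nonneg ht hS0.le
  have hGt_nn : 0 ≤ Gf t := by
    have h2apos : (0:ℝ) < 2*a := by linarith
    have h0 : 0 ≤ (2*a - 1) * E t := mul_nonneg (by linarith) hEt
    exact le_of_mul_le_mul_left (show 2*a*0 ≤ 2*a*Gf t by linarith) h2apos
  have hexpK : Real.exp (-K) * Real.exp K = 1 := by
    rw [← Real.exp_add]; simp
  constructor
  · -- lower bound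
    have hm : Gf 0 * Real.exp (K * (0 / Real.sqrt (1 + (0:ℝ) ^ 2))) ≤
        Gf t * Real.exp (K * (t / Real.sqrt (1 + t ^ 2))) :=
      hMono (self_mem_Ici) (mem_Ici.2 ht) ht
    have hm0 : Gf 0 * Real.exp (K * (0 / Real.sqrt (1 + (0:ℝ) ^ 2))) = E 0 := by
      simp [hG0]
    rw [hm0] at hm
    have hle : Real.exp (K * (t / Real.sqrt (1 + t ^ 2))) ≤ Real.exp K :=
      Real.exp_le_exp.2 (mul_le_of_le_one_right hK.le hψ1)
    have step1 : E 0 ≤ Gf t * Real.exp K :=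
      le_trans hm (mul_le_mul_of_nonneg_left hle hGt_nn)
    have step2 : Real.exp (-K) * E 0 ≤ Gf t := by
      have h := mul_le_mul_of_nonneg_left step1 (Real.exp_pos (-K)).le
      have heq : Real.exp (-K) * (Gf t * Real.exp K) = Gf t := by
        rw [show Real.exp (-K) * (Gf t * Real.exp K)
          = (Real.exp (-K) * Real.exp K) * Gf t from by ring, hexpK, one_mul]
      linarith [heq ▸ h]
    rw [div_mul_eq_mul_div, div_le_iff₀ (show (0:ℝ) < 2*a + 1 by linarith)]
    nlinarith [step2, hGat, ha]
  · -- upper bound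
    have hm : Gf t * Real.exp (-K * (t / Real.sqrt (1 + t ^ 2))) ≤
        Gf 0 * Real.exp (-K * (0 / Real.sqrt (1 + (0:ℝ) ^ 2))) :=
      hAnti (self_mem_Ici) (mem_Ici.2 ht) ht
    have hm0 : Gf 0 * Real.exp (-K * (0 / Real.sqrt (1 + (0:ℝ) ^ 2))) = E 0 := by
      simp [hG0]
    rw [hm0] at hm
    have hle : Real.exp (-K) ≤ Real.exp (-K * (t / Real.sqrt (1 + t ^ 2))) :=
      Real.exp_le_exp.2 (by linarith [mul_le_of_le_one_right hK.le hψ1])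
    have step1 : Gf t * Real.exp (-K) ≤ E 0 :=
      le_trans (mul_le_mul_of_nonneg_left hle hGt_nn) hm
    have step2 : Gf t ≤ Real.exp K * E 0 := by
      have h := mul_le_mul_of_nonneg_left step1 (Real.exp_pos K).le
      have heq : Real.exp K * (Gf t * Real.exp (-K)) = Gf t := by
        rw [show Real.exp K * (Gf t * Real.exp (-K))
          = (Real.exp (-K) * Real.exp K) * Gf t from by ring, hexpK, one_mul]
      linarith [heq ▸ h]
    rw [div_mul_eq_mul_div, le_div_iff₀ h2a]
    nlinarith [step2, hGbt, ha, hE0, Real.exp_pos K]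


end
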